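/- Let n ≥ 1 and let Ω be a real n×n orthogonal matrix whose first column equals n^{-1/2}·1ₙ (equivalently, 1ₙᵀΩ = √n·[1,0,…,0]). Let S be a real m×n matrix with rows s₁,…,sₘ, and set M = SΩᵀ with rows r₁,…,rₘ. Then Σᵢ₌₁ᵐ (rᵢ·1ₙ)²·rᵢᵀ = n·Ω·(Σᵢ₌₁ᵐ sᵢ₁²·sᵢᵀ), where sᵢ₁ denotes the first entry of the row sᵢ. -/
import Mathlib


open Matrix

theorem stmt_8 (n m : ℕ) (hn : 0 < n)
    (Ω : Matrix (Fin n) (Fin n) ℝ)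
    (hΩ : Ωᵀ * Ω = 1)
    (hcol : ∀ i : Fin n, Ω i ⟨0, hn⟩ = (Real.sqrt n)⁻¹)
    (S : Matrix (Fin m) (Fin n) ℝ)
    (M : Matrix (Fin m) (Fin n) ℝ) (hM : M = S * Ωᵀ) :
    (fun j => ∑ i, (∑ j', M i j') ^ 2 * M i j) =
      (n : ℝ) • Ω.mulVec (fun j => ∑ i, (S i ⟨0, hn⟩) ^ 2 * S i j) := by
  subst hM
  set z : Fin n := ⟨0, hn⟩
  have hsn : (0:ℝ) < Real.sqrt n := Real.sqrt_pos.mpr (by exact_mod_cast hn)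
  have hcolsum : ∀ k, (∑ j', Ω j' k) = Real.sqrt n * (1 : Matrix (Fin n) (Fin n) ℝ) z k := by
    intro k
    have h1 : (Ωᵀ * Ω) z k = (Real.sqrt n)⁻¹ * ∑ j', Ω j' k := by
      simp [Matrix.mul_apply, Matrix.transpose_apply, hcol, Finset.mul_sum]
    rw [hΩ] at h1
    field_simp at h1 ⊢
    linarith [h1]
  have hrow : ∀ i, (∑ j', (S * Ωᵀ) i j') = Real.sqrt n * S i z := by
    intro i
    have : (∑ j', (S * Ωᵀ) i j') = ∑ k, S i k * ∑ j', Ω j' k := by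
      simp only [Matrix.mul_apply, Matrix.transpose_apply, Finset.mul_sum]
      rw [Finset.sum_comm]
    rw [this]
    have : ∀ k, S i k * ∑ j', Ω j' k = Real.sqrt n * (S i k * (1 : Matrix (Fin n) (Fin n) ℝ) z k) := by
      intro k; rw [hcolsum k]; ring
    rw [Finset.sum_congr rfl fun k _ => this k, ← Finset.mul_sum]
    congr 1
    simp [Matrix.one_apply, eq_comm]
  funext j
  simp only [hrow, Matrix.mulVec, dotProduct, Pi.smul_apply, smul_eq_mul]
  have hnsq : Real.sqrt n ^ 2 = (n:ℝ) := Real.sq_sqrt (by positivity)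
  simp only [Matrix.mul_apply, Matrix.transpose_apply, mul_pow, hnsq]
  simp only [Finset.mul_sum]
  rw [Finset.sum_comm]
  exact Finset.sum_congr rfl fun k _ => Finset.sum_congr rfl fun i _ => by ring
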